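/- Lemma 2, parts 3–4 (Convergence of the submartingale). Let θ_TX = θ₀ and run the partial-information algorithm with self-awareness, and define m_i := Σ_{k=1}^K v_k log μ_{k,i}(θ_TX). Then: (3) there exists a random variable m_∞ such that m_i → m_∞ almost surely as i → ∞; and (4) the expectations E(m_i) converge to a finite limit. -/

import Mathlib

open MeasureTheory ProbabilityTheory Filter Topology


private lemma weighted_exp_log_le {ι : Type*} [Fintype ι] (w z : ι → ℝ)
    (hw : ∀ i, 0 ≤ w i) (hw1 : ∑ i, w i = 1) (hz : ∀ i, 0 < z i) :
    Real.exp (∑ i, w i * Real.log (z i)) ≤ ∑ i, w i * z i := by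
  rw [Real.exp_sum]
  have h : ∀ i ∈ Finset.univ, Real.exp (w i * Real.log (z i)) = z i ^ w i := fun i _ => by
    rw [Real.rpow_def_of_pos (hz i), mul_comm]
  rw [Finset.prod_congr rfl h]
  exact Real.geom_mean_le_arith_mean_weighted _ _ _ (fun i _ => hw i) hw1
    (fun i _ => (hz i).le)

private lemma log_norm_exp_ge {K H : ℕ} [NeZero H] (w : Fin K → ℝ) (p : Fin K → Fin H → ℝ)
    (hw : ∀ ℓ, 0 ≤ w ℓ) (hw1 : ∑ ℓ, w ℓ = 1) (hp : ∀ ℓ θ, 0 < p ℓ θ)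
    (hp1 : ∀ ℓ, ∑ θ, p ℓ θ = 1) (θ0 : Fin H) :
    ∑ ℓ, w ℓ * Real.log (p ℓ θ0) ≤
      Real.log (Real.exp (∑ ℓ, w ℓ * Real.log (p ℓ θ0)) /
        ∑ θ', Real.exp (∑ ℓ, w ℓ * Real.log (p ℓ θ'))) := by
  have hZpos : 0 < ∑ θ', Real.exp (∑ ℓ, w ℓ * Real.log (p ℓ θ')) :=
    Finset.sum_pos (fun _ _ => Real.exp_pos _) Finset.univ_nonempty
  have hZ1 : ∑ θ', Real.exp (∑ ℓ, w ℓ * Real.log (p ℓ θ')) ≤ 1 := by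
    calc ∑ θ', Real.exp (∑ ℓ, w ℓ * Real.log (p ℓ θ'))
        ≤ ∑ θ', ∑ ℓ, w ℓ * p ℓ θ' := Finset.sum_le_sum fun θ' _ =>
            weighted_exp_log_le w (fun ℓ => p ℓ θ') hw hw1 (fun ℓ => hp ℓ θ')
      _ = ∑ ℓ, w ℓ * ∑ θ', p ℓ θ' := by
            rw [Finset.sum_comm]
            exact Finset.sum_congr rfl fun ℓ _ => (Finset.mul_sum _ _ _).symm
      _ = 1 := by simp only [hp1, mul_one]; exact hw1
  rw [Real.log_div (Real.exp_ne_zero _) hZpos.ne', Real.log_exp]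
  have := Real.log_nonpos hZpos.le hZ1
  linarith

theorem submartingale_convergence_with_self_awareness
    {Ω : Type} [mΩ : MeasurableSpace Ω] (P : Measure Ω) [IsProbabilityMeasure P]
    (K H : ℕ) (hK : 0 < K) (hH : 2 ≤ H)
    (X : Fin K → Type) [∀ k, MeasurableSpace (X k)]
    (ν : ∀ k, Measure (X k))
    (L : ∀ k : Fin K, Fin H → X k → ℝ)
    (θ0 : Fin H)
    (hLpos : ∀ k θ x, 0 < L k θ x)
    (hLmeas : ∀ k θ, Measurable (L k θ))
    (hLdens : ∀ k θ, ∫ x, L k θ x ∂(ν k) = 1)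
    (ξ : ∀ k : Fin K, ℕ → Ω → X k)
    (hξmeas : ∀ k i, Measurable (ξ k i))
    (hξdist : ∀ k (i : ℕ), 1 ≤ i →
      Measure.map (ξ k i) P = (ν k).withDensity (fun x => ENNReal.ofReal (L k θ0 x)))
    (hξindep : iIndepFun (m := fun _ : ℕ => MeasurableSpace.pi)
      (fun (i : ℕ) (ω : Ω) (k : Fin K) => ξ k (i + 1) ω) P)
    (hKL : ∀ k θ θ',
      Integrable (fun x => L k θ x * Real.log (L k θ x / L k θ' x)) (ν k))
    (a : Fin K → Fin K → ℝ)
    (ha_nonneg : ∀ ℓ k, 0 ≤ a ℓ k)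
    (ha_stoch : ∀ k, ∑ ℓ, a ℓ k = 1)
    (ha_prim : ∃ n : ℕ, ∀ ℓ k, 0 < ((Matrix.of a) ^ n) ℓ k)
    (v : Fin K → ℝ)
    (hv_pos : ∀ ℓ, 0 < v ℓ)
    (hv_sum : ∑ ℓ, v ℓ = 1)
    (hv_eig : ∀ ℓ, ∑ k, a ℓ k * v k = v ℓ)
    (ha_self : ∀ k, 0 < a k k)
    (θTX : Fin H)
    (hθTX : θTX = θ0)
    (μb ψ ψh : Fin K → ℕ → Fin H → Ω → ℝ)
    (μinit : Fin K → Fin H → ℝ)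
    (hμinit_pos : ∀ k θ, 0 < μinit k θ)
    (hμinit_sum : ∀ k, ∑ θ, μinit k θ = 1)
    (hμb0 : ∀ k θ ω, μb k 0 θ ω = μinit k θ)
    (hψ : ∀ k (i : ℕ) θ ω, ψ k (i + 1) θ ω =
      μb k i θ ω * L k θ (ξ k (i + 1) ω) /
        ∑ θ', μb k i θ' ω * L k θ' (ξ k (i + 1) ω))
    (hψh_tx : ∀ k (i : ℕ) ω, ψh k (i + 1) θTX ω = ψ k (i + 1) θTX ω)
    (hψh_ntx : ∀ k (i : ℕ) θ ω, θ ≠ θTX →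
      ψh k (i + 1) θ ω = (1 - ψ k (i + 1) θTX ω) / ((H : ℝ) - 1))
    (hcomb : ∀ k (i : ℕ) θ ω, μb k (i + 1) θ ω =
      Real.exp (a k k * Real.log (ψ k (i + 1) θ ω) +
          ∑ ℓ ∈ Finset.univ.erase k, a ℓ k * Real.log (ψh ℓ (i + 1) θ ω)) /
        ∑ θ', Real.exp (a k k * Real.log (ψ k (i + 1) θ' ω) +
          ∑ ℓ ∈ Finset.univ.erase k, a ℓ k * Real.log (ψh ℓ (i + 1) θ' ω)))
    :
    (∃ minf : Ω → ℝ, ∀ᵐ ω ∂P,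
      Tendsto (fun (i : ℕ) => ∑ k, v k * Real.log (μb k i θTX ω)) atTop (𝓝 (minf ω))) ∧
    (∃ c : ℝ,
      Tendsto (fun (i : ℕ) => ∫ ω, (∑ k, v k * Real.log (μb k i θTX ω)) ∂P) atTop (𝓝 c)) := by
    classical
  haveI : NeZero H := ⟨by omega⟩
  subst hθTX
  -- notation
  set m : ℕ → Ω → ℝ := fun i ω => ∑ k, v k * Real.log (μb k i θTX ω) with hm_def
  -- basic positivity facts
  have hμpos : ∀ k i θ ω, 0 < μb k i θ ω := by
    intro k i θ ω
    cases i with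
    | zero => rw [hμb0]; exact hμinit_pos k θ
    | succ i =>
      rw [hcomb]
      exact div_pos (Real.exp_pos _)
        (Finset.sum_pos (fun θ' _ => Real.exp_pos _) Finset.univ_nonempty)
  have hμsum : ∀ k i ω, ∑ θ, μb k i θ ω = 1 := by
    intro k i ω
    cases i with
    | zero => simp only [hμb0]; exact hμinit_sum k
    | succ i =>
      have hpos : 0 < ∑ θ', Real.exp (a k k * Real.log (ψ k (i + 1) θ' ω) +
          ∑ ℓ ∈ Finset.univ.erase k, a ℓ k * Real.log (ψh ℓ (i + 1) θ' ω)) :=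
        Finset.sum_pos (fun θ' _ => Real.exp_pos _) Finset.univ_nonempty
      simp only [hcomb]
      rw [← Finset.sum_div, div_self hpos.ne']
  have hμle1 : ∀ k i θ ω, μb k i θ ω ≤ 1 := by
    intro k i θ ω
    calc μb k i θ ω ≤ ∑ θ', μb k i θ' ω :=
          Finset.single_le_sum (fun θ' _ => (hμpos k i θ' ω).le) (Finset.mem_univ θ)
      _ = 1 := hμsum k i ω
  -- facts about the intermediate beliefs
  have hden : ∀ ℓ (i : ℕ) ω, 0 < ∑ θ', μb ℓ i θ' ω * L ℓ θ' (ξ ℓ (i + 1) ω) := fun ℓ i ω =>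
    Finset.sum_pos (fun θ' _ => mul_pos (hμpos ℓ i θ' ω) (hLpos ℓ θ' _)) Finset.univ_nonempty
  have hψpos : ∀ ℓ (i : ℕ) θ ω, 0 < ψ ℓ (i + 1) θ ω := by
    intro ℓ i θ ω
    rw [hψ]
    exact div_pos (mul_pos (hμpos _ _ _ _) (hLpos _ _ _)) (hden ℓ i ω)
  have hψsum : ∀ ℓ (i : ℕ) ω, ∑ θ, ψ ℓ (i + 1) θ ω = 1 := by
    intro ℓ i ω
    simp only [hψ]
    rw [← Finset.sum_div, div_self (hden ℓ i ω).ne']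
  have hψlt1 : ∀ ℓ (i : ℕ) ω, ψ ℓ (i + 1) θTX ω < 1 := by
    intro ℓ i ω
    obtain ⟨θ1, hθ1⟩ := Fintype.exists_ne_of_one_lt_card
      (by simpa using Nat.lt_of_lt_of_le Nat.one_lt_two hH) θTX
    have hsub : ({θTX, θ1} : Finset (Fin H)) ⊆ Finset.univ := Finset.subset_univ _
    have hpair : ∑ θ ∈ ({θTX, θ1} : Finset (Fin H)), ψ ℓ (i + 1) θ ω ≤ 1 := by
      rw [← hψsum ℓ i ω]
      exact Finset.sum_le_sum_of_subset_of_nonneg hsub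
        (fun θ _ _ => (hψpos ℓ i θ ω).le)
    rw [Finset.sum_pair (Ne.symm hθ1)] at hpair
    have := hψpos ℓ i θ1 ω
    linarith
  have hHR : (0:ℝ) < (H:ℝ) - 1 := by
    have : (2:ℝ) ≤ (H:ℝ) := by exact_mod_cast hH
    linarith
  have hψhpos : ∀ ℓ (i : ℕ) θ ω, 0 < ψh ℓ (i + 1) θ ω := by
    intro ℓ i θ ω
    by_cases hθ : θ = θTX
    · rw [hθ, hψh_tx]; exact hψpos ℓ i θTX ω
    · rw [hψh_ntx ℓ i θ ω hθ]
      exact div_pos (by linarith [hψlt1 ℓ i ω]) hHR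
  have hψhsum : ∀ ℓ (i : ℕ) ω, ∑ θ, ψh ℓ (i + 1) θ ω = 1 := by
    intro ℓ i ω
    rw [← Finset.add_sum_erase _ _ (Finset.mem_univ θTX)]
    rw [Finset.sum_congr rfl (fun θ hθ =>
      hψh_ntx ℓ i θ ω (Finset.ne_of_mem_erase hθ))]
    rw [Finset.sum_const, Finset.card_erase_of_mem (Finset.mem_univ θTX)]
    rw [hψh_tx]
    have hcard : (Finset.univ : Finset (Fin H)).card = H := by simp
    rw [hcard]
    rw [nsmul_eq_mul]
    have hHcast : ((H - 1 : ℕ) : ℝ) = (H:ℝ) - 1 := by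
      have : 1 ≤ H := by omega
      push_cast [this]
      ring
    rw [hHcast]
    field_simp
    ring
  -- the key inequality: log of updated belief dominates network average of log ψ
  have hkeyS : ∀ k (i : ℕ) ω,
      ∑ ℓ, a ℓ k * Real.log (ψ ℓ (i + 1) θTX ω) ≤ Real.log (μb k (i + 1) θTX ω) := by
    intro k i ω
    set z : Fin K → Fin H → ℝ :=
      fun ℓ θ' => if ℓ = k then ψ k (i + 1) θ' ω else ψh ℓ (i + 1) θ' ω with hz
    have hzpos : ∀ ℓ θ', 0 < z ℓ θ' := by
      intro ℓ θ'
      simp only [hz]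
      by_cases h : ℓ = k
      · rw [if_pos h]; exact hψpos k i θ' ω
      · rw [if_neg h]; exact hψhpos ℓ i θ' ω
    have hzsum : ∀ ℓ, ∑ θ', z ℓ θ' = 1 := by
      intro ℓ
      by_cases h : ℓ = k
      · simp only [hz, h, if_pos rfl]; exact hψsum k i ω
      · simp only [hz, if_neg h]; exact hψhsum ℓ i ω
    have hrow : ∀ θ', a k k * Real.log (ψ k (i + 1) θ' ω) +
        ∑ ℓ ∈ Finset.univ.erase k, a ℓ k * Real.log (ψh ℓ (i + 1) θ' ω) =
        ∑ ℓ, a ℓ k * Real.log (z ℓ θ') := by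
      intro θ'
      rw [← Finset.add_sum_erase _ (fun ℓ => a ℓ k * Real.log (z ℓ θ')) (Finset.mem_univ k)]
      congr 1
      · simp only [hz, if_pos rfl]
      · exact Finset.sum_congr rfl fun ℓ hℓ => by
          simp only [hz, if_neg (Finset.ne_of_mem_erase hℓ)]
    have hμeq : μb k (i + 1) θTX ω =
        Real.exp (∑ ℓ, a ℓ k * Real.log (z ℓ θTX)) /
          ∑ θ', Real.exp (∑ ℓ, a ℓ k * Real.log (z ℓ θ')) := by
      rw [hcomb k i θTX ω]
      rw [hrow θTX]
      congr 1
      exact Finset.sum_congr rfl fun θ' _ => by rw [hrow θ']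
    have h1 : ∑ ℓ, a ℓ k * Real.log (ψ ℓ (i + 1) θTX ω) =
        ∑ ℓ, a ℓ k * Real.log (z ℓ θTX) := by
      refine Finset.sum_congr rfl fun ℓ _ => ?_
      by_cases h : ℓ = k
      · subst h; simp only [hz, if_pos rfl]
      · simp only [hz, if_neg h, hψh_tx]
    rw [h1, hμeq]
    exact log_norm_exp_ge (fun ℓ => a ℓ k) z (fun ℓ => ha_nonneg ℓ k) (ha_stoch k)
      hzpos hzsum θTX
  have hψlogeq : ∀ ℓ (i : ℕ) θ ω, Real.log (ψ ℓ (i + 1) θ ω) =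
      Real.log (μb ℓ i θ ω) +
        Real.log (L ℓ θ (ξ ℓ (i + 1) ω) / ∑ θ', μb ℓ i θ' ω * L ℓ θ' (ξ ℓ (i + 1) ω)) := by
    intro ℓ i θ ω
    rw [hψ, mul_div_assoc,
      Real.log_mul (hμpos ℓ i θ ω).ne' (div_pos (hLpos _ _ _) (hden ℓ i ω)).ne']
  -- the signal vector process and the filtration
  set V : ℕ → Ω → (∀ k, X k) := fun i ω k => ξ k (i + 1) ω with hV_def
  have hVmeas : ∀ i, Measurable (V i) :=
    fun i => measurable_pi_lambda _ (fun k => hξmeas k (i + 1))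
  set F : ℕ → MeasurableSpace Ω :=
    fun n => ⨆ i ∈ {j : ℕ | j < n}, MeasurableSpace.comap (V i) MeasurableSpace.pi with hF_def
  have hFmono : Monotone F := by
    intro p q hpq
    exact biSup_mono (fun i (hi : i < p) => lt_of_lt_of_le hi hpq)
  have hFle : ∀ n, F n ≤ mΩ := by
    intro n
    exact iSup₂_le fun i _ => (hVmeas i).comap_le
  set 𝓕 : Filtration ℕ mΩ := ⟨F, hFmono, hFle⟩ with h𝓕_def
  -- measurability of beliefs w.r.t. the filtration
  have hmeasμ : ∀ n k θ, Measurable[F n] (μb k n θ) := by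
    intro n
    induction n with
    | zero =>
      intro k θ
      have he : μb k 0 θ = fun _ => μinit k θ := funext (hμb0 k θ)
      rw [he]
      exact measurable_const
    | succ n ih =>
      have hVn : Measurable[F (n + 1)] (V n) :=
        Measurable.of_comap_le
          (le_biSup (f := fun i => MeasurableSpace.comap (V i) MeasurableSpace.pi)
            (show n ∈ {j : ℕ | j < n + 1} from Nat.lt_succ_self n))
      have hξn : ∀ ℓ, Measurable[F (n + 1)] (fun ω => ξ ℓ (n + 1) ω) := fun ℓ =>
        (measurable_pi_apply ℓ).comp hVn
      have hμn : ∀ ℓ θ, Measurable[F (n + 1)] (μb ℓ n θ) := fun ℓ θ =>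
        (ih ℓ θ).mono (hFmono (Nat.le_succ n)) le_rfl
      have hψm : ∀ ℓ θ, Measurable[F (n + 1)] (ψ ℓ (n + 1) θ) := by
        intro ℓ θ
        have he : ψ ℓ (n + 1) θ = fun ω => μb ℓ n θ ω * L ℓ θ (ξ ℓ (n + 1) ω) /
            ∑ θ', μb ℓ n θ' ω * L ℓ θ' (ξ ℓ (n + 1) ω) := funext (hψ ℓ n θ)
        rw [he]
        exact ((hμn ℓ θ).mul ((hLmeas ℓ θ).comp (hξn ℓ))).div
          (Finset.measurable_sum _ fun θ' _ => (hμn ℓ θ').mul ((hLmeas ℓ θ').comp (hξn ℓ)))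
      have hψhm : ∀ ℓ θ, Measurable[F (n + 1)] (ψh ℓ (n + 1) θ) := by
        intro ℓ θ
        by_cases hθ : θ = θTX
        · subst hθ
          have he : ψh ℓ (n + 1) θ = ψ ℓ (n + 1) θ := funext (hψh_tx ℓ n)
          rw [he]
          exact hψm ℓ θ
        · have he : ψh ℓ (n + 1) θ = fun ω => (1 - ψ ℓ (n + 1) θTX ω) / ((H : ℝ) - 1) :=
            funext (fun ω => hψh_ntx ℓ n θ ω hθ)
          rw [he]
          exact (measurable_const.sub (hψm ℓ θTX)).div_const _
      intro k θ
      have he : μb k (n + 1) θ = fun ω =>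
          Real.exp (a k k * Real.log (ψ k (n + 1) θ ω) +
            ∑ ℓ ∈ Finset.univ.erase k, a ℓ k * Real.log (ψh ℓ (n + 1) θ ω)) /
          ∑ θ', Real.exp (a k k * Real.log (ψ k (n + 1) θ' ω) +
            ∑ ℓ ∈ Finset.univ.erase k, a ℓ k * Real.log (ψh ℓ (n + 1) θ' ω)) :=
        funext (hcomb k n θ)
      rw [he]
      refine Measurable.div ?_ (Finset.measurable_sum _ fun θ' _ => ?_)
      · exact Real.measurable_exp.comp
          (((Real.measurable_log.comp (hψm k θ)).const_mul _).add
            (Finset.measurable_sum _ fun ℓ _ =>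
              (Real.measurable_log.comp (hψhm ℓ θ)).const_mul _))
      · exact Real.measurable_exp.comp
          (((Real.measurable_log.comp (hψm k θ')).const_mul _).add
            (Finset.measurable_sum _ fun ℓ _ =>
              (Real.measurable_log.comp (hψhm ℓ θ')).const_mul _))
  have hmeasμ' : ∀ n k θ, Measurable (μb k n θ) :=
    fun n k θ => (hmeasμ n k θ).mono (hFle n) le_rfl
  have hadapted : StronglyAdapted 𝓕 m := by
    intro n
    refine Measurable.stronglyMeasurable ?_
    exact Finset.measurable_sum _ fun k _ =>
      ((Real.measurable_log.comp (hmeasμ n k θTX)).const_mul _)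
  -- integrability
  set T : Fin K → ℕ → Ω → ℝ := fun ℓ j ω =>
    Real.log (∑ θ', L ℓ θ' (ξ ℓ j ω)) - Real.log (L ℓ θTX (ξ ℓ j ω)) with hT_def
  have hLint : ∀ ℓ θ, Integrable (L ℓ θ) (ν ℓ) := by
    intro ℓ θ
    by_contra h
    have := hLdens ℓ θ
    rw [integral_undef h] at this
    norm_num at this
  have hint_of : ∀ ℓ (j : ℕ) (g : X ℓ → ℝ), Measurable g →
      Integrable (fun x => g x * L ℓ θTX x) (ν ℓ) →
      Integrable (fun ω => g (ξ ℓ (j + 1) ω)) P := by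
    intro ℓ j g hg hgint
    have h1 : Integrable g (Measure.map (ξ ℓ (j + 1)) P) := by
      rw [hξdist ℓ (j + 1) (by omega)]
      rw [integrable_withDensity_iff ((hLmeas ℓ θTX).ennreal_ofReal)
        (Filter.Eventually.of_forall fun x => ENNReal.ofReal_lt_top)]
      refine hgint.congr (Filter.Eventually.of_forall fun x => ?_)
      show g x * L ℓ θTX x = g x * (ENNReal.ofReal (L ℓ θTX x)).toReal
      rw [ENNReal.toReal_ofReal (hLpos ℓ θTX x).le]
    exact (integrable_map_measure hg.aestronglyMeasurable
      (hξmeas ℓ (j + 1)).aemeasurable).1 h1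
  have hWint : ∀ ℓ θ' (j : ℕ),
      Integrable (fun ω => L ℓ θ' (ξ ℓ (j + 1) ω) / L ℓ θTX (ξ ℓ (j + 1) ω)) P := by
    intro ℓ θ' j
    refine hint_of ℓ j (fun x => L ℓ θ' x / L ℓ θTX x)
      ((hLmeas ℓ θ').div (hLmeas ℓ θTX)) ?_
    refine (hLint ℓ θ').congr (Filter.Eventually.of_forall fun x => ?_)
    show L ℓ θ' x = L ℓ θ' x / L ℓ θTX x * L ℓ θTX x
    rw [div_mul_cancel₀ _ (hLpos ℓ θTX x).ne']
  have hWexp : ∀ ℓ θ' (j : ℕ),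
      ∫ ω, L ℓ θ' (ξ ℓ (j + 1) ω) / L ℓ θTX (ξ ℓ (j + 1) ω) ∂P = 1 := by
    intro ℓ θ' j
    have hg : Measurable (fun x => L ℓ θ' x / L ℓ θTX x) :=
      (hLmeas ℓ θ').div (hLmeas ℓ θTX)
    have h1 : ∫ ω, L ℓ θ' (ξ ℓ (j + 1) ω) / L ℓ θTX (ξ ℓ (j + 1) ω) ∂P
        = ∫ x, L ℓ θ' x / L ℓ θTX x ∂(Measure.map (ξ ℓ (j + 1)) P) :=
      (integral_map (hξmeas ℓ (j + 1)).aemeasurable hg.aestronglyMeasurable).symm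
    rw [h1, hξdist ℓ (j + 1) (by omega)]
    have h2 : (ν ℓ).withDensity (fun x => ENNReal.ofReal (L ℓ θTX x))
        = (ν ℓ).withDensity (fun x => ((L ℓ θTX x).toNNReal : ENNReal)) := rfl
    rw [h2, integral_withDensity_eq_integral_smul (hLmeas ℓ θTX).real_toNNReal]
    have h3 : ∀ x, (L ℓ θTX x).toNNReal • (L ℓ θ' x / L ℓ θTX x) = L ℓ θ' x := by
      intro x
      rw [NNReal.smul_def, smul_eq_mul, Real.coe_toNNReal _ (hLpos ℓ θTX x).le, mul_comm]
      exact div_mul_cancel₀ _ (hLpos ℓ θTX x).ne'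
    simp only [h3]
    exact hLdens ℓ θ'
  have hlogWint : ∀ ℓ θ' (j : ℕ),
      Integrable (fun ω => Real.log (L ℓ θ' (ξ ℓ (j + 1) ω) / L ℓ θTX (ξ ℓ (j + 1) ω))) P := by
    intro ℓ θ' j
    refine hint_of ℓ j (fun x => Real.log (L ℓ θ' x / L ℓ θTX x))
      (Real.measurable_log.comp ((hLmeas ℓ θ').div (hLmeas ℓ θTX))) ?_
    refine ((hKL ℓ θTX θ').neg).congr (Filter.Eventually.of_forall fun x => ?_)
    show -(L ℓ θTX x * Real.log (L ℓ θTX x / L ℓ θ' x)) =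
      Real.log (L ℓ θ' x / L ℓ θTX x) * L ℓ θTX x
    rw [Real.log_div (hLpos ℓ θ' x).ne' (hLpos ℓ θTX x).ne',
      Real.log_div (hLpos ℓ θTX x).ne' (hLpos ℓ θ' x).ne']
    ring
  have hTnonneg : ∀ ℓ (j : ℕ) ω, 0 ≤ T ℓ (j + 1) ω := by
    intro ℓ j ω
    simp only [hT_def]
    rw [sub_nonneg]
    refine Real.log_le_log (hLpos ℓ θTX _) ?_
    exact Finset.single_le_sum (fun θ' _ => (hLpos ℓ θ' _).le) (Finset.mem_univ θTX)
  have hTint : ∀ ℓ (j : ℕ), Integrable (T ℓ (j + 1)) P := by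
    intro ℓ j
    have hsumpos : ∀ ω, 0 < ∑ θ', L ℓ θ' (ξ ℓ (j + 1) ω) := fun ω =>
      Finset.sum_pos (fun θ' _ => hLpos ℓ θ' _) Finset.univ_nonempty
    have hmeasT : Measurable (T ℓ (j + 1)) := by
      simp only [hT_def]
      exact (Real.measurable_log.comp ((Finset.measurable_sum Finset.univ
          fun θ' _ => hLmeas ℓ θ').comp (hξmeas ℓ (j + 1)))).sub
        (Real.measurable_log.comp ((hLmeas ℓ θTX).comp (hξmeas ℓ (j + 1))))
    have hbound : ∀ ω, T ℓ (j + 1) ω ≤ Real.log H +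
        ∑ θ', |Real.log (L ℓ θ' (ξ ℓ (j + 1) ω) / L ℓ θTX (ξ ℓ (j + 1) ω))| := by
      intro ω
      have hTlog : T ℓ (j + 1) ω =
          Real.log (∑ θ', L ℓ θ' (ξ ℓ (j + 1) ω) / L ℓ θTX (ξ ℓ (j + 1) ω)) := by
        simp only [hT_def]
        rw [← Real.log_div (hsumpos ω).ne' (hLpos ℓ θTX _).ne', Finset.sum_div]
      have h1 : ∑ θ', L ℓ θ' (ξ ℓ (j + 1) ω) / L ℓ θTX (ξ ℓ (j + 1) ω) ≤
          (H : ℝ) * Real.exp (∑ θ',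
            |Real.log (L ℓ θ' (ξ ℓ (j + 1) ω) / L ℓ θTX (ξ ℓ (j + 1) ω))|) := by
        calc ∑ θ', L ℓ θ' (ξ ℓ (j + 1) ω) / L ℓ θTX (ξ ℓ (j + 1) ω)
            ≤ ∑ _θ' : Fin H, Real.exp (∑ θ',
              |Real.log (L ℓ θ' (ξ ℓ (j + 1) ω) / L ℓ θTX (ξ ℓ (j + 1) ω))|) := by
              refine Finset.sum_le_sum fun θ' _ => ?_
              rw [← Real.exp_log (div_pos (hLpos ℓ θ' _) (hLpos ℓ θTX _))]
              refine Real.exp_le_exp.2 (le_trans (le_abs_self _) ?_)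
              exact Finset.single_le_sum (f := fun θ'' =>
                  |Real.log (L ℓ θ'' (ξ ℓ (j + 1) ω) / L ℓ θTX (ξ ℓ (j + 1) ω))|)
                (fun θ'' _ => abs_nonneg _) (Finset.mem_univ θ')
          _ = (H : ℝ) * Real.exp (∑ θ',
              |Real.log (L ℓ θ' (ξ ℓ (j + 1) ω) / L ℓ θTX (ξ ℓ (j + 1) ω))|) := by
              rw [Finset.sum_const, Finset.card_univ, Fintype.card_fin, nsmul_eq_mul]
      rw [hTlog]
      have hsumWpos : 0 < ∑ θ', L ℓ θ' (ξ ℓ (j + 1) ω) / L ℓ θTX (ξ ℓ (j + 1) ω) :=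
        Finset.sum_pos (fun θ' _ => div_pos (hLpos ℓ θ' _) (hLpos ℓ θTX _))
          Finset.univ_nonempty
      calc Real.log (∑ θ', L ℓ θ' (ξ ℓ (j + 1) ω) / L ℓ θTX (ξ ℓ (j + 1) ω))
          ≤ Real.log ((H : ℝ) * Real.exp (∑ θ',
            |Real.log (L ℓ θ' (ξ ℓ (j + 1) ω) / L ℓ θTX (ξ ℓ (j + 1) ω))|)) :=
            Real.log_le_log hsumWpos h1
        _ = Real.log H + ∑ θ',
            |Real.log (L ℓ θ' (ξ ℓ (j + 1) ω) / L ℓ θTX (ξ ℓ (j + 1) ω))| := by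
            rw [Real.log_mul (by positivity) (Real.exp_ne_zero _), Real.log_exp]
    have hbint : Integrable (fun ω => Real.log H +
        ∑ θ', |Real.log (L ℓ θ' (ξ ℓ (j + 1) ω) / L ℓ θTX (ξ ℓ (j + 1) ω))|) P :=
      (integrable_const _).add
        (integrable_finset_sum Finset.univ fun θ' _ => (hlogWint ℓ θ' j).abs)
    refine Integrable.mono' hbint hmeasT.aestronglyMeasurable ?_
    refine Filter.Eventually.of_forall fun ω => ?_
    rw [Real.norm_eq_abs, abs_of_nonneg (hTnonneg ℓ j ω)]
    exact hbound ω
  have hlogsum_le : ∀ ℓ (i : ℕ) ω,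
      Real.log (∑ θ', μb ℓ i θ' ω * L ℓ θ' (ξ ℓ (i + 1) ω)) ≤
        Real.log (∑ θ', L ℓ θ' (ξ ℓ (i + 1) ω)) := by
    intro ℓ i ω
    refine Real.log_le_log (hden ℓ i ω) (Finset.sum_le_sum fun θ' _ => ?_)
    exact mul_le_of_le_one_left (hLpos ℓ θ' _).le (hμle1 ℓ i θ' ω)
  have hdlow : ∀ ℓ (i : ℕ) ω, -T ℓ (i + 1) ω ≤
      Real.log (L ℓ θTX (ξ ℓ (i + 1) ω) / ∑ θ', μb ℓ i θ' ω * L ℓ θ' (ξ ℓ (i + 1) ω)) := by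
    intro ℓ i ω
    rw [Real.log_div (hLpos ℓ θTX _).ne' (hden ℓ i ω).ne']
    simp only [hT_def]
    have := hlogsum_le ℓ i ω
    linarith
  have hdup : ∀ ℓ (i : ℕ) ω,
      Real.log (L ℓ θTX (ξ ℓ (i + 1) ω) / ∑ θ', μb ℓ i θ' ω * L ℓ θ' (ξ ℓ (i + 1) ω)) ≤
        -Real.log (μb ℓ i θTX ω) := by
    intro ℓ i ω
    rw [Real.log_div (hLpos ℓ θTX _).ne' (hden ℓ i ω).ne']
    have h1 : μb ℓ i θTX ω * L ℓ θTX (ξ ℓ (i + 1) ω) ≤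
        ∑ θ', μb ℓ i θ' ω * L ℓ θ' (ξ ℓ (i + 1) ω) :=
      Finset.single_le_sum (fun θ' _ => (mul_pos (hμpos ℓ i θ' ω) (hLpos ℓ θ' _)).le)
        (Finset.mem_univ θTX)
    have h2 : Real.log (μb ℓ i θTX ω) + Real.log (L ℓ θTX (ξ ℓ (i + 1) ω)) ≤
        Real.log (∑ θ', μb ℓ i θ' ω * L ℓ θ' (ξ ℓ (i + 1) ω)) := by
      rw [← Real.log_mul (hμpos ℓ i θTX ω).ne' (hLpos ℓ θTX _).ne']
      exact Real.log_le_log (mul_pos (hμpos ℓ i θTX ω) (hLpos ℓ θTX _)) h1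
    linarith
  have hGlow : ∀ k (i : ℕ) ω,
      ∑ ℓ, a ℓ k * (Real.log (μb ℓ i θTX ω) - T ℓ (i + 1) ω) ≤
        Real.log (μb k (i + 1) θTX ω) := by
    intro k i ω
    refine le_trans (Finset.sum_le_sum fun ℓ _ =>
      mul_le_mul_of_nonneg_left ?_ (ha_nonneg ℓ k)) (hkeyS k i ω)
    rw [hψlogeq ℓ i θTX ω]
    have := hdlow ℓ i ω
    linarith
  have hGnonpos : ∀ k (i : ℕ) ω, Real.log (μb k i θTX ω) ≤ 0 := fun k i ω =>
    Real.log_nonpos (hμpos k i θTX ω).le (hμle1 k i θTX ω)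
  have hGint : ∀ (i : ℕ) k, Integrable (fun ω => Real.log (μb k i θTX ω)) P := by
    intro i
    induction i with
    | zero =>
      intro k
      refine (integrable_const (Real.log (μinit k θTX))).congr ?_
      refine Filter.Eventually.of_forall fun ω => ?_
      show Real.log (μinit k θTX) = Real.log (μb k 0 θTX ω)
      rw [hμb0]
    | succ i ih =>
      intro k
      have hmeas : Measurable (fun ω => Real.log (μb k (i + 1) θTX ω)) :=
        Real.measurable_log.comp (hmeasμ' (i + 1) k θTX)
      refine Integrable.mono'
        (g := fun ω => ∑ ℓ, a ℓ k * (T ℓ (i + 1) ω + |Real.log (μb ℓ i θTX ω)|))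
        (integrable_finset_sum _ fun ℓ _ => ((hTint ℓ i).add (ih ℓ).abs).const_mul _)
        hmeas.aestronglyMeasurable ?_
      refine Filter.Eventually.of_forall fun ω => ?_
      show ‖Real.log (μb k (i + 1) θTX ω)‖ ≤
        ∑ ℓ, a ℓ k * (T ℓ (i + 1) ω + |Real.log (μb ℓ i θTX ω)|)
      rw [Real.norm_eq_abs, abs_of_nonpos (hGnonpos k (i + 1) ω)]
      have h1 := hGlow k i ω
      have h3 : ∑ ℓ, a ℓ k * (T ℓ (i + 1) ω - Real.log (μb ℓ i θTX ω)) =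
          -∑ ℓ, a ℓ k * (Real.log (μb ℓ i θTX ω) - T ℓ (i + 1) ω) := by
        rw [← Finset.sum_neg_distrib]
        exact Finset.sum_congr rfl fun ℓ _ => by ring
      have h2 : -Real.log (μb k (i + 1) θTX ω) ≤
          ∑ ℓ, a ℓ k * (T ℓ (i + 1) ω - Real.log (μb ℓ i θTX ω)) := by
        rw [h3]; linarith
      refine le_trans h2 (Finset.sum_le_sum fun ℓ _ =>
        mul_le_mul_of_nonneg_left ?_ (ha_nonneg ℓ k))
      have := neg_abs_le (Real.log (μb ℓ i θTX ω))
      linarith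
  have hmint : ∀ i, Integrable (m i) P := by
    intro i
    exact integrable_finset_sum _ fun k _ => (hGint i k).const_mul _
  -- the key submartingale inequality, pointwise part
  set D : ℕ → Ω → ℝ := fun i ω => ∑ ℓ, v ℓ *
    Real.log (L ℓ θTX (ξ ℓ (i + 1) ω) / ∑ θ', μb ℓ i θ' ω * L ℓ θ' (ξ ℓ (i + 1) ω)) with hD_def
  have hdmeas : ∀ ℓ (i : ℕ), Measurable (fun ω =>
      Real.log (L ℓ θTX (ξ ℓ (i + 1) ω) / ∑ θ', μb ℓ i θ' ω * L ℓ θ' (ξ ℓ (i + 1) ω))) := by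
    intro ℓ i
    exact Real.measurable_log.comp (((hLmeas ℓ θTX).comp (hξmeas ℓ (i + 1))).div
      (Finset.measurable_sum _ fun θ' _ =>
        (hmeasμ' i ℓ θ').mul ((hLmeas ℓ θ').comp (hξmeas ℓ (i + 1)))))
  have hdint : ∀ ℓ (i : ℕ), Integrable (fun ω =>
      Real.log (L ℓ θTX (ξ ℓ (i + 1) ω) / ∑ θ', μb ℓ i θ' ω * L ℓ θ' (ξ ℓ (i + 1) ω))) P := by
    intro ℓ i
    refine Integrable.mono' (g := fun ω => T ℓ (i + 1) ω + |Real.log (μb ℓ i θTX ω)|)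
      ((hTint ℓ i).add ((hGint i ℓ).abs)) (hdmeas ℓ i).aestronglyMeasurable ?_
    refine Filter.Eventually.of_forall fun ω => ?_
    show ‖Real.log (L ℓ θTX (ξ ℓ (i + 1) ω) /
      ∑ θ', μb ℓ i θ' ω * L ℓ θ' (ξ ℓ (i + 1) ω))‖ ≤
      T ℓ (i + 1) ω + |Real.log (μb ℓ i θTX ω)|
    rw [Real.norm_eq_abs, abs_le]
    have ha1 := hdlow ℓ i ω
    have ha2 := hdup ℓ i ω
    have ha3 := hTnonneg ℓ i ω
    have ha4 := abs_nonneg (Real.log (μb ℓ i θTX ω))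
    have ha5 := neg_abs_le (Real.log (μb ℓ i θTX ω))
    constructor
    · linarith
    · calc Real.log (L ℓ θTX (ξ ℓ (i + 1) ω) /
            ∑ θ', μb ℓ i θ' ω * L ℓ θ' (ξ ℓ (i + 1) ω))
          ≤ -Real.log (μb ℓ i θTX ω) := ha2
        _ ≤ |Real.log (μb ℓ i θTX ω)| := neg_le_abs _
        _ ≤ T ℓ (i + 1) ω + |Real.log (μb ℓ i θTX ω)| := le_add_of_nonneg_left ha3
  have hDint : ∀ i, Integrable (D i) P := by
    intro i
    simp only [hD_def]
    exact integrable_finset_sum _ fun ℓ _ => (hdint ℓ i).const_mul _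
  have hm_rec : ∀ i ω, m i ω + D i ω ≤ m (i + 1) ω := by
    intro i ω
    have e1 : m i ω + D i ω = ∑ ℓ, v ℓ * Real.log (ψ ℓ (i + 1) θTX ω) := by
      rw [hm_def, hD_def]
      simp only
      rw [← Finset.sum_add_distrib]
      refine Finset.sum_congr rfl fun ℓ _ => ?_
      rw [hψlogeq ℓ i θTX ω]
      ring
    have e2 : ∑ ℓ, v ℓ * Real.log (ψ ℓ (i + 1) θTX ω) =
        ∑ k, v k * ∑ ℓ, a ℓ k * Real.log (ψ ℓ (i + 1) θTX ω) := by
      calc ∑ ℓ, v ℓ * Real.log (ψ ℓ (i + 1) θTX ω)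
          = ∑ ℓ, ∑ k, v k * (a ℓ k * Real.log (ψ ℓ (i + 1) θTX ω)) := by
            refine Finset.sum_congr rfl fun ℓ _ => ?_
            rw [← hv_eig ℓ, Finset.sum_mul]
            exact Finset.sum_congr rfl fun k _ => by ring
        _ = ∑ k, ∑ ℓ, v k * (a ℓ k * Real.log (ψ ℓ (i + 1) θTX ω)) := Finset.sum_comm
        _ = ∑ k, v k * ∑ ℓ, a ℓ k * Real.log (ψ ℓ (i + 1) θTX ω) :=
            Finset.sum_congr rfl fun k _ => (Finset.mul_sum _ _ _).symm
    rw [e1, e2]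
    exact Finset.sum_le_sum fun k _ =>
      mul_le_mul_of_nonneg_left (hkeyS k i ω) (hv_pos k).le
  -- conditional-expectation-free submartingale step
  have hstep : ∀ (i : ℕ) (s : Set Ω), MeasurableSet[F i] s →
      ∫ ω in s, m i ω ∂P ≤ ∫ ω in s, m (i + 1) ω ∂P := by
    intro i s hs
    have hsmeas : MeasurableSet s := hFle i s hs
    have hD0 : 0 ≤ ∫ ω in s, D i ω ∂P := by
      have hdterm : ∀ ℓ : Fin K, 0 ≤ ∫ ω in s,
          Real.log (L ℓ θTX (ξ ℓ (i + 1) ω) /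
            ∑ θ', μb ℓ i θ' ω * L ℓ θ' (ξ ℓ (i + 1) ω)) ∂P := by
        intro ℓ
        have hWm : ∀ θ' : Fin H,
            Measurable (fun ω => L ℓ θ' (ξ ℓ (i + 1) ω) / L ℓ θTX (ξ ℓ (i + 1) ω)) := fun θ' =>
          ((hLmeas ℓ θ').comp (hξmeas ℓ (i + 1))).div ((hLmeas ℓ θTX).comp (hξmeas ℓ (i + 1)))
        have hμWint : ∀ θ' : Fin H, Integrable (fun ω =>
            μb ℓ i θ' ω * (L ℓ θ' (ξ ℓ (i + 1) ω) / L ℓ θTX (ξ ℓ (i + 1) ω))) P := fun θ' =>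
          (hWint ℓ θ' i).bdd_mul (c := 1) (hmeasμ' i ℓ θ').aestronglyMeasurable
            (Filter.Eventually.of_forall fun ω => by
              rw [Real.norm_eq_abs, abs_of_pos (hμpos ℓ i θ' ω)]
              exact hμle1 ℓ i θ' ω)
        have hgfpos : ∀ ω, 0 < ∑ θ', μb ℓ i θ' ω *
            (L ℓ θ' (ξ ℓ (i + 1) ω) / L ℓ θTX (ξ ℓ (i + 1) ω)) := fun ω =>
          Finset.sum_pos (fun θ' _ => mul_pos (hμpos ℓ i θ' ω)
            (div_pos (hLpos _ _ _) (hLpos _ _ _))) Finset.univ_nonempty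
        have hgfeq : ∀ ω, Real.log (L ℓ θTX (ξ ℓ (i + 1) ω) /
            ∑ θ', μb ℓ i θ' ω * L ℓ θ' (ξ ℓ (i + 1) ω)) =
            -Real.log (∑ θ', μb ℓ i θ' ω *
              (L ℓ θ' (ξ ℓ (i + 1) ω) / L ℓ θTX (ξ ℓ (i + 1) ω))) := by
          intro ω
          have e : ∑ θ', μb ℓ i θ' ω *
              (L ℓ θ' (ξ ℓ (i + 1) ω) / L ℓ θTX (ξ ℓ (i + 1) ω)) =
              (∑ θ', μb ℓ i θ' ω * L ℓ θ' (ξ ℓ (i + 1) ω)) / L ℓ θTX (ξ ℓ (i + 1) ω) := by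
            rw [Finset.sum_div]
            exact Finset.sum_congr rfl fun θ' _ => (mul_div_assoc _ _ _).symm
          rw [e, Real.log_div (hden ℓ i ω).ne' (hLpos ℓ θTX _).ne',
            Real.log_div (hLpos ℓ θTX _).ne' (hden ℓ i ω).ne']
          ring
        have hptwise : ∀ ω, 1 - (∑ θ', μb ℓ i θ' ω *
            (L ℓ θ' (ξ ℓ (i + 1) ω) / L ℓ θTX (ξ ℓ (i + 1) ω))) ≤
            Real.log (L ℓ θTX (ξ ℓ (i + 1) ω) /
              ∑ θ', μb ℓ i θ' ω * L ℓ θ' (ξ ℓ (i + 1) ω)) := by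
          intro ω
          rw [hgfeq ω]
          have := Real.log_le_sub_one_of_pos (hgfpos ω)
          linarith
        have hindep : Indep (F i) (MeasurableSpace.comap (V i) MeasurableSpace.pi) P := by
          have h1 := indep_biSup_compl (fun n => (hVmeas n).comap_le) hξindep.iIndep
            {j : ℕ | j < i}
          exact indep_of_indep_of_le_right h1
            (le_biSup (f := fun n => MeasurableSpace.comap (V n) MeasurableSpace.pi)
              (show i ∈ {j : ℕ | j < i}ᶜ by simp))
        have hindicmeas : ∀ θ' : Fin H,
            Measurable (s.indicator (fun ω => μb ℓ i θ' ω)) := fun θ' =>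
          (((hmeasμ i ℓ θ').indicator hs).mono (hFle i) le_rfl)
        have hindint : ∀ θ' : Fin H,
            Integrable (s.indicator (fun ω => μb ℓ i θ' ω)) P := by
          intro θ'
          refine Integrable.mono' (integrable_const (1:ℝ))
            (hindicmeas θ').aestronglyMeasurable ?_
          refine Filter.Eventually.of_forall fun ω => ?_
          show ‖s.indicator (fun ω => μb ℓ i θ' ω) ω‖ ≤ 1
          rw [Real.norm_eq_abs]
          by_cases hω : ω ∈ s
          · rw [Set.indicator_of_mem hω, abs_of_pos (hμpos ℓ i θ' ω)]
            exact hμle1 ℓ i θ' ω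
          · rw [Set.indicator_of_notMem hω]
            simp
        have hindepfun : ∀ θ' : Fin H, IndepFun (s.indicator (fun ω => μb ℓ i θ' ω))
            (fun ω => L ℓ θ' (ξ ℓ (i + 1) ω) / L ℓ θTX (ξ ℓ (i + 1) ω)) P := by
          intro θ'
          rw [IndepFun_iff_Indep]
          have hl : MeasurableSpace.comap (s.indicator (fun ω => μb ℓ i θ' ω))
              (borel ℝ) ≤ F i := ((hmeasμ i ℓ θ').indicator hs).comap_le
          have hVmeasself : Measurable[MeasurableSpace.comap (V i) MeasurableSpace.pi]
              (V i) := Measurable.of_comap_le le_rfl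
          have hWc : Measurable[MeasurableSpace.comap (V i) MeasurableSpace.pi]
              (fun ω => L ℓ θ' (ξ ℓ (i + 1) ω) / L ℓ θTX (ξ ℓ (i + 1) ω)) := by
            have h2 : Measurable (fun p : ∀ k, X k => L ℓ θ' (p ℓ) / L ℓ θTX (p ℓ)) :=
              ((hLmeas ℓ θ').comp (measurable_pi_apply ℓ)).div
                ((hLmeas ℓ θTX).comp (measurable_pi_apply ℓ))
            exact h2.comp hVmeasself
          exact indep_of_indep_of_le_right
            (indep_of_indep_of_le_left hindep ((hmeasμ i ℓ θ').indicator hs).comap_le)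
            hWc.comap_le
        have hterm : ∀ θ' : Fin H, ∫ ω in s, μb ℓ i θ' ω *
            (L ℓ θ' (ξ ℓ (i + 1) ω) / L ℓ θTX (ξ ℓ (i + 1) ω)) ∂P =
            ∫ ω in s, μb ℓ i θ' ω ∂P := by
          intro θ'
          have hIM : ∫ ω, s.indicator (fun ω => μb ℓ i θ' ω) ω *
              (L ℓ θ' (ξ ℓ (i + 1) ω) / L ℓ θTX (ξ ℓ (i + 1) ω)) ∂P =
              (∫ ω, s.indicator (fun ω => μb ℓ i θ' ω) ω ∂P) *
                ∫ ω, L ℓ θ' (ξ ℓ (i + 1) ω) / L ℓ θTX (ξ ℓ (i + 1) ω) ∂P :=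
            (hindepfun θ').integral_fun_mul_eq_mul_integral (hindint θ').aestronglyMeasurable (hWint ℓ θ' i).aestronglyMeasurable
          calc ∫ ω in s, μb ℓ i θ' ω *
              (L ℓ θ' (ξ ℓ (i + 1) ω) / L ℓ θTX (ξ ℓ (i + 1) ω)) ∂P
              = ∫ ω, s.indicator (fun ω => μb ℓ i θ' ω *
                  (L ℓ θ' (ξ ℓ (i + 1) ω) / L ℓ θTX (ξ ℓ (i + 1) ω))) ω ∂P :=
                (integral_indicator hsmeas).symm
            _ = ∫ ω, s.indicator (fun ω => μb ℓ i θ' ω) ω *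
                  (L ℓ θ' (ξ ℓ (i + 1) ω) / L ℓ θTX (ξ ℓ (i + 1) ω)) ∂P := by
                refine integral_congr_ae (Filter.Eventually.of_forall fun ω => ?_)
                show s.indicator (fun ω => μb ℓ i θ' ω *
                    (L ℓ θ' (ξ ℓ (i + 1) ω) / L ℓ θTX (ξ ℓ (i + 1) ω))) ω =
                  s.indicator (fun ω => μb ℓ i θ' ω) ω *
                    (L ℓ θ' (ξ ℓ (i + 1) ω) / L ℓ θTX (ξ ℓ (i + 1) ω))
                by_cases hω : ω ∈ s
                · rw [Set.indicator_of_mem hω, Set.indicator_of_mem hω]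
                · rw [Set.indicator_of_notMem hω, Set.indicator_of_notMem hω, zero_mul]
            _ = ∫ ω in s, μb ℓ i θ' ω ∂P := by
                rw [hIM, hWexp ℓ θ' i, mul_one, integral_indicator hsmeas]
        have hμint : ∀ θ' : Fin H, Integrable (fun ω => μb ℓ i θ' ω) P := by
          intro θ'
          refine Integrable.mono' (integrable_const (1:ℝ))
            (hmeasμ' i ℓ θ').aestronglyMeasurable ?_
          refine Filter.Eventually.of_forall fun ω => ?_
          show ‖μb ℓ i θ' ω‖ ≤ 1
          rw [Real.norm_eq_abs, abs_of_pos (hμpos ℓ i θ' ω)]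
          exact hμle1 ℓ i θ' ω
        have hgfint : Integrable (fun ω => ∑ θ', μb ℓ i θ' ω *
            (L ℓ θ' (ξ ℓ (i + 1) ω) / L ℓ θTX (ξ ℓ (i + 1) ω))) P :=
          integrable_finset_sum Finset.univ fun θ' _ => hμWint θ'
        have h2 : ∫ ω in s, (1 - ∑ θ', μb ℓ i θ' ω *
            (L ℓ θ' (ξ ℓ (i + 1) ω) / L ℓ θTX (ξ ℓ (i + 1) ω))) ∂P ≤
            ∫ ω in s, Real.log (L ℓ θTX (ξ ℓ (i + 1) ω) /
              ∑ θ', μb ℓ i θ' ω * L ℓ θ' (ξ ℓ (i + 1) ω)) ∂P :=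
          setIntegral_mono_on (((integrable_const 1).sub hgfint).integrableOn)
            ((hdint ℓ i).integrableOn) hsmeas (fun ω _ => hptwise ω)
        have h3 : ∫ ω in s, (1 - ∑ θ', μb ℓ i θ' ω *
            (L ℓ θ' (ξ ℓ (i + 1) ω) / L ℓ θTX (ξ ℓ (i + 1) ω))) ∂P = 0 := by
          rw [integral_sub (integrable_const 1).integrableOn hgfint.integrableOn]
          rw [integral_finset_sum Finset.univ (fun θ' _ => (hμWint θ').integrableOn)]
          rw [Finset.sum_congr rfl (fun θ' _ => hterm θ')]
          rw [← integral_finset_sum Finset.univ (fun θ' _ => (hμint θ').integrableOn)]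
          have h4 : ∫ ω in s, (∑ θ', μb ℓ i θ' ω) ∂P = ∫ ω in s, (1:ℝ) ∂P :=
            setIntegral_congr_fun hsmeas (fun ω _ => hμsum ℓ i ω)
          rw [h4]
          ring
        linarith
      simp only [hD_def]
      rw [integral_finset_sum Finset.univ
        (fun ℓ _ => ((hdint ℓ i).const_mul _).integrableOn)]
      refine Finset.sum_nonneg fun ℓ _ => ?_
      rw [integral_const_mul]
      exact mul_nonneg (hv_pos ℓ).le (hdterm ℓ)
    have hadd : ∫ ω in s, m i ω ∂P + ∫ ω in s, D i ω ∂P ≤ ∫ ω in s, m (i + 1) ω ∂P := by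
      rw [← integral_add (hmint i).integrableOn (hDint i).integrableOn]
      exact setIntegral_mono_on ((hmint i).add (hDint i)).integrableOn
        (hmint (i + 1)).integrableOn hsmeas (fun ω _ => hm_rec i ω)
    linarith
  have hsub : Submartingale m 𝓕 P :=
    submartingale_of_setIntegral_le_succ hadapted hmint hstep
  have hmnonpos : ∀ i ω, m i ω ≤ 0 := by
    intro i ω
    refine Finset.sum_nonpos fun k _ => ?_
    exact mul_nonpos_of_nonneg_of_nonpos (hv_pos k).le
      (Real.log_nonpos (hμpos k i θTX ω).le (hμle1 k i θTX ω))
  have hImono : Monotone fun n => ∫ ω, m n ω ∂P := by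
    refine monotone_nat_of_le_succ fun n => ?_
    have := hstep n Set.univ MeasurableSet.univ
    simpa [Measure.restrict_univ] using this
  have hInonpos : ∀ n, ∫ ω, m n ω ∂P ≤ 0 := by
    intro n
    exact integral_nonpos (fun ω => hmnonpos n ω)
  have hbdd : ∀ n, eLpNorm (m n) 1 P ≤ ENNReal.ofReal (-∫ ω, m 0 ω ∂P) := by
    intro n
    rw [eLpNorm_one_eq_lintegral_enorm,
      ← ofReal_integral_norm_eq_lintegral_enorm (hmint n)]
    refine ENNReal.ofReal_le_ofReal ?_
    have h1 : ∫ ω, ‖m n ω‖ ∂P = -∫ ω, m n ω ∂P := by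
      rw [← integral_neg]
      refine integral_congr_ae (Filter.Eventually.of_forall fun ω => ?_)
      simpa [Real.norm_eq_abs] using abs_of_nonpos (hmnonpos n ω)
    rw [h1]
    have := hImono (Nat.zero_le n)
    linarith
  have hconv := hsub.ae_tendsto_limitProcess (R := (-∫ ω, m 0 ω ∂P).toNNReal)
    (by simpa [ENNReal.ofReal] using hbdd)
  constructor
  · exact ⟨𝓕.limitProcess m P, hconv⟩
  · refine ⟨⨆ n, ∫ ω, m n ω ∂P, ?_⟩
    exact tendsto_atTop_ciSup hImono ⟨0, fun x ⟨n, hn⟩ => hn ▸ hInonpos n⟩
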